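/- For every positive integer n there exists ε > 0 such that: if p ∈ ℤ[X] is monic of natDegree n and every complex root z of p (i.e., every element of the multiset of roots of p mapped to ℂ) satisfies |z − 1| < ε, then p = (X − 1)^n. -/

import Mathlib

open Polynomial

lemma abs_prod_le_one (s : Multiset ℂ) (h : ∀ z ∈ s, ‖z‖ ≤ 1) :
    ‖s.prod‖ ≤ 1 := by
  induction s using Multiset.induction with
  | empty => simp
  | cons a t ih =>
    rw [Multiset.prod_cons, norm_mul]
    have ha := h a (Multiset.mem_cons_self a t)
    have ht := ih (fun z hz => h z (Multiset.mem_cons_of_mem hz))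
    calc ‖a‖ * ‖t.prod‖ ≤ 1 * 1 :=
          mul_le_mul ha ht (norm_nonneg _) zero_le_one
      _ = 1 := one_mul 1

lemma abs_prod_lt_one (s : Multiset ℂ) (hs : s ≠ 0)
    (h : ∀ z ∈ s, ‖z‖ < 1 / 2) : ‖s.prod‖ < 1 := by
  obtain ⟨a, ha⟩ := Multiset.exists_mem_of_ne_zero hs
  obtain ⟨t, rfl⟩ := Multiset.exists_cons_of_mem ha
  rw [Multiset.prod_cons, norm_mul]
  have ha' := h a (Multiset.mem_cons_self a t)
  have ht : ‖t.prod‖ ≤ 1 :=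
    abs_prod_le_one t (fun z hz => le_of_lt (lt_of_lt_of_le
      (h z (Multiset.mem_cons_of_mem hz)) (by norm_num)))
  calc ‖a‖ * ‖t.prod‖ ≤ ‖a‖ * 1 :=
        mul_le_mul_of_nonneg_left ht (norm_nonneg _)
    _ = ‖a‖ := mul_one _
    _ < 1 := ha'.trans (by norm_num)

lemma key (n : ℕ) : ∀ p : Polynomial ℤ, p.Monic → p.natDegree = n →
    (∀ z ∈ (p.map (Int.castRingHom ℂ)).roots, ‖z - 1‖ < 1 / 2) →
    p = (Polynomial.X - 1) ^ n := by
  induction n with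
  | zero =>
    intro p hm hd _
    rw [pow_zero]
    exact hm.natDegree_eq_zero.mp hd
  | succ n ih =>
    intro p hm hd hroots
    set φ := Int.castRingHom ℂ with hφ
    have hPm : (p.map φ).Monic := hm.map φ
    have hsplit : Splits (p.map φ) := IsAlgClosed.splits _
    have hcard : Multiset.card (p.map φ).roots = n + 1 := by
      rw [Polynomial.splits_iff_card_roots.mp hsplit, hm.natDegree_map, hd]
    have heq : p.map φ = ((p.map φ).roots.map fun a => X - C a).prod :=
      hsplit.eq_prod_roots_of_monic hPm
    -- evaluate at 1
    have heval : ((p.eval 1 : ℤ) : ℂ) =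
        ((p.map φ).roots.map fun a => 1 - a).prod := by
      have h1 : (p.map φ).eval 1 = ((p.eval 1 : ℤ) : ℂ) := by
        simp [Polynomial.eval_map, Polynomial.eval₂_at_one]
      rw [← h1, heq]
      rw [Polynomial.eval_multiset_prod, Multiset.map_map]
      simp
    have habs : ‖((p.eval 1 : ℤ) : ℂ)‖ < 1 := by
      rw [heval]
      apply abs_prod_lt_one
      · simp only [ne_eq, Multiset.map_eq_zero]
        intro h0
        rw [h0] at hcard
        simp at hcard
      · intro z hz
        obtain ⟨a, ha, rfl⟩ := Multiset.mem_map.mp hz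
        have := hroots a ha
        rwa [← norm_neg, neg_sub]
    have hpe : p.eval 1 = 0 := by
      by_contra h0
      have : (1 : ℝ) ≤ |((p.eval 1 : ℤ) : ℝ)| := by
        rw [← Int.cast_abs]
        exact_mod_cast Int.one_le_abs h0
      rw [Complex.norm_intCast] at habs
      linarith
    have hdvd : (X - C (1 : ℤ)) ∣ p := Polynomial.dvd_iff_isRoot.mpr hpe
    obtain ⟨q, hq⟩ := hdvd
    have hXm : (X - C (1 : ℤ)).Monic := Polynomial.monic_X_sub_C 1
    have hqm : q.Monic := by
      have := hm
      rw [hq] at this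
      exact hXm.of_mul_monic_left this
    have hqd : q.natDegree = n := by
      have hne : (X - C (1 : ℤ)) ≠ 0 := hXm.ne_zero
      have hqne : q ≠ 0 := hqm.ne_zero
      have := Polynomial.natDegree_mul hne hqne
      rw [← hq, hd, Polynomial.natDegree_X_sub_C] at this
      omega
    have hqroots : ∀ z ∈ (q.map φ).roots, ‖z - 1‖ < 1 / 2 := by
      intro z hz
      apply hroots
      have hle : (q.map φ).roots ≤ (p.map φ).roots := by
        apply Polynomial.roots.le_of_dvd hPm.ne_zero
        exact ⟨(X - C (1 : ℤ)).map φ, by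
          rw [← Polynomial.map_mul, mul_comm, ← hq]⟩
      exact Multiset.subset_of_le hle hz
    have hq' : q = (X - 1) ^ n := ih q hqm hqd hqroots
    rw [hq, hq', pow_succ, mul_comm]
    norm_num

theorem roots_near_one_eq_pow (n : ℕ) (hn : 0 < n) :
    ∃ ε : ℝ, 0 < ε ∧
      ∀ p : Polynomial ℤ, p.Monic → p.natDegree = n →
        (∀ z ∈ (p.map (Int.castRingHom ℂ)).roots, ‖z - 1‖ < ε) →
        p = (Polynomial.X - 1) ^ n := by
  exact ⟨1 / 2, by norm_num, key n⟩
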